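/- Let f₁,…,f_N : ℝ^{m×n} → ℝ be differentiable and suppose there exists L_* > 0 such that ‖∇f_i(X) − ∇f_i(Y)‖_* ≤ L_*‖X − Y‖ for all X, Y ∈ ℝ^{m×n} and all i, where the norm on the right is the spectral norm. For stacked matrices U_{[N]}, V_{[N]} ∈ ℝ^{(Nm)×n} with blocks U_i, V_i, define ∇F(U_{[N]}) := [∇f₁(U₁)ᵀ,…,∇f_N(U_N)ᵀ]ᵀ. Then ‖∇F(U_{[N]}) − ∇F(V_{[N]})‖_* ≤ N L_* ‖U_{[N]} − V_{[N]}‖ for all U_{[N]}, V_{[N]} ∈ ℝ^{(Nm)×n}, where the left norm is nuclear and the right norm is spectral. -/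

import Mathlib

open Matrix Kronecker

/-- Spectral norm: ℓ²→ℓ² operator norm of a real matrix. -/
noncomputable def specNorm {ι κ : Type*} [Fintype ι] [Fintype κ] [DecidableEq κ]
    (A : Matrix ι κ ℝ) : ℝ :=
  ‖LinearMap.toContinuousLinearMap (Matrix.toEuclideanLin A)‖

/-- The old Mathlib `Matrix.PosSemidef.sqrt` (removed upstream), with its old definition. -/
noncomputable def Matrix.PosSemidef.sqrt {n : Type*} [Fintype n] [DecidableEq n]
    {A : Matrix n n ℝ} (hA : Matrix.PosSemidef A) : Matrix n n ℝ :=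
  hA.1.eigenvectorUnitary.1 * Matrix.diagonal ((↑) ∘ (√·) ∘ hA.1.eigenvalues) *
    (star hA.1.eigenvectorUnitary : Matrix n n ℝ)

/-- Nuclear norm: trace of the positive semidefinite square root of `Aᵀ * A`. -/
noncomputable def nucNorm {ι κ : Type*} [Fintype ι] [Fintype κ] [DecidableEq κ]
    (A : Matrix ι κ ℝ) : ℝ :=
  Matrix.trace (Matrix.posSemidef_conjTranspose_mul_self A).sqrt

/-- Frobenius norm. -/
noncomputable def frobNorm {ι κ : Type*} [Fintype ι] [Fintype κ] (A : Matrix ι κ ℝ) : ℝ :=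
  Real.sqrt (∑ i, ∑ j, (A i j) ^ 2)

/-- Trace inner product `⟨A, B⟩ = trace (Aᵀ B)`. -/
noncomputable def tin {ι κ : Type*} [Fintype ι] [Fintype κ] (A B : Matrix ι κ ℝ) : ℝ :=
  Matrix.trace (Aᵀ * B)

/-- Vertical stacking of `N` matrices of size `m × n`. -/
def vstack {N m n : ℕ} (Y : Fin N → Matrix (Fin m) (Fin n) ℝ) :
    Matrix (Fin N × Fin m) (Fin n) ℝ :=
  fun p j => Y p.1 p.2 j

section Aux

variable {ι κ : Type*} [Fintype ι] [Fintype κ] [DecidableEq κ]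

lemma dot_self_nonneg' (x : ι → ℝ) : 0 ≤ x ⬝ᵥ x :=
  Finset.sum_nonneg fun i _ => mul_self_nonneg _

lemma euc_norm_symm (y : ι → ℝ) :
    ‖(WithLp.equiv 2 (ι → ℝ)).symm y‖ = Real.sqrt (y ⬝ᵥ y) := by
  rw [EuclideanSpace.norm_eq]
  congr 1
  simp [dotProduct, Real.norm_eq_abs, sq_abs, pow_two]

lemma specNorm_nonneg (A : Matrix ι κ ℝ) : 0 ≤ specNorm A := norm_nonneg _

lemma dot_mulVec_self_le (A : Matrix ι κ ℝ) (x : κ → ℝ) :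
    (A *ᵥ x) ⬝ᵥ (A *ᵥ x) ≤ specNorm A ^ 2 * (x ⬝ᵥ x) := by
  have h := (LinearMap.toContinuousLinearMap (Matrix.toEuclideanLin A)).le_opNorm
      ((WithLp.equiv 2 (κ → ℝ)).symm x)
  rw [show (LinearMap.toContinuousLinearMap (Matrix.toEuclideanLin A))
        ((WithLp.equiv 2 (κ → ℝ)).symm x)
      = (WithLp.equiv 2 (ι → ℝ)).symm (A *ᵥ x) from
    rfl,
    euc_norm_symm, euc_norm_symm] at h
  calc (A *ᵥ x) ⬝ᵥ (A *ᵥ x) = Real.sqrt ((A *ᵥ x) ⬝ᵥ (A *ᵥ x)) ^ 2 :=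
        (Real.sq_sqrt (dot_self_nonneg' _)).symm
    _ ≤ (specNorm A * Real.sqrt (x ⬝ᵥ x)) ^ 2 :=
        pow_le_pow_left₀ (Real.sqrt_nonneg _) h 2
    _ = specNorm A ^ 2 * (x ⬝ᵥ x) := by rw [mul_pow, Real.sq_sqrt (dot_self_nonneg' _)]

lemma specNorm_le_of_bound (A : Matrix ι κ ℝ) (c : ℝ) (hc : 0 ≤ c)
    (h : ∀ x : κ → ℝ, (A *ᵥ x) ⬝ᵥ (A *ᵥ x) ≤ c ^ 2 * (x ⬝ᵥ x)) : specNorm A ≤ c := by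
  refine ContinuousLinearMap.opNorm_le_bound _ hc fun x => ?_
  obtain ⟨y, rfl⟩ : ∃ y, (WithLp.equiv 2 (κ → ℝ)).symm y = x := ⟨WithLp.equiv 2 _ x, rfl⟩
  rw [show (LinearMap.toContinuousLinearMap (Matrix.toEuclideanLin A))
        ((WithLp.equiv 2 (κ → ℝ)).symm y)
      = (WithLp.equiv 2 (ι → ℝ)).symm (A *ᵥ y) from
    rfl, euc_norm_symm, euc_norm_symm]
  have h2 := Real.sqrt_le_sqrt (h y)
  rwa [Real.sqrt_mul (sq_nonneg c), Real.sqrt_sq hc] at h2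

lemma dot_le_sqrt (u v : ι → ℝ) :
    u ⬝ᵥ v ≤ Real.sqrt (u ⬝ᵥ u) * Real.sqrt (v ⬝ᵥ v) := by
  calc u ⬝ᵥ v ≤ |u ⬝ᵥ v| := le_abs_self _
    _ = Real.sqrt ((u ⬝ᵥ v) ^ 2) := (Real.sqrt_sq_eq_abs _).symm
    _ ≤ Real.sqrt ((u ⬝ᵥ u) * (v ⬝ᵥ v)) := Real.sqrt_le_sqrt (by
        simpa [dotProduct, pow_two] using Finset.sum_mul_sq_le_sq_mul_sq Finset.univ u v)
    _ = _ := Real.sqrt_mul (dot_self_nonneg' u) _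

lemma conj_diag_entry (W M : Matrix κ κ ℝ) (j : κ) :
    (Wᵀ * M * W) j j = (fun i => W i j) ⬝ᵥ (M *ᵥ fun i => W i j) := by
  simp only [mul_apply, mulVec, dotProduct, transpose_apply, Finset.sum_mul, Finset.mul_sum]
  rw [Finset.sum_comm]
  refine Finset.sum_congr rfl fun i _ => Finset.sum_congr rfl fun k _ => by ring

lemma dot_mulVec_eq (Q : Matrix ι κ ℝ) (x : κ → ℝ) :
    (Q *ᵥ x) ⬝ᵥ (Q *ᵥ x) = x ⬝ᵥ ((Qᵀ * Q) *ᵥ x) := by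
  conv_rhs => rw [← mulVec_mulVec, dotProduct_mulVec, vecMul_transpose]

end Aux

section Spectral

variable {ι κ : Type*} [Fintype ι] [Fintype κ] [DecidableEq κ]

lemma star_eq_transpose (W : Matrix κ κ ℝ) : star W = Wᵀ := rfl

lemma ofReal_comp_eq (lam : κ → ℝ) : (RCLike.ofReal ∘ lam : κ → ℝ) = lam := by
  rw [RCLike.ofReal_real_eq_id, Function.id_comp]

lemma nucNorm_eq (A : Matrix ι κ ℝ) :
    nucNorm A = ∑ j, Real.sqrt ((Matrix.posSemidef_conjTranspose_mul_self A).1.eigenvalues j) := by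
  set hH := Matrix.posSemidef_conjTranspose_mul_self A
  unfold nucNorm Matrix.PosSemidef.sqrt
  rw [Matrix.trace_mul_cycle]
  have h1 : star (hH.1.eigenvectorUnitary : Matrix κ κ ℝ) * (hH.1.eigenvectorUnitary : Matrix κ κ ℝ) = 1 :=
    hH.1.eigenvectorUnitary.2.1
  rw [h1, one_mul, Matrix.trace_diagonal]
  simp [RCLike.ofReal_real_eq_id]

lemma nucNorm_nonneg (A : Matrix ι κ ℝ) : 0 ≤ nucNorm A := by
  rw [nucNorm_eq]
  exact Finset.sum_nonneg fun j _ => Real.sqrt_nonneg _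

lemma spec_diag (A : Matrix ι κ ℝ) :
    ((Matrix.posSemidef_conjTranspose_mul_self A).1.eigenvectorUnitary : Matrix κ κ ℝ)ᵀ * (Aᵀ * A) *
        ((Matrix.posSemidef_conjTranspose_mul_self A).1.eigenvectorUnitary : Matrix κ κ ℝ)
      = diagonal (Matrix.posSemidef_conjTranspose_mul_self A).1.eigenvalues := by
  have h := (Matrix.posSemidef_conjTranspose_mul_self A).1.conjStarAlgAut_star_eigenvectorUnitary
  simp only [Unitary.conjStarAlgAut_apply, star_star, Unitary.coe_star] at h
  rw [star_eq_transpose, ofReal_comp_eq] at h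
  exact h

lemma holder (Q A : Matrix ι κ ℝ) :
    Matrix.trace (Qᵀ * A) ≤ specNorm Q * nucNorm A := by
  set lam := (Matrix.posSemidef_conjTranspose_mul_self A).1.eigenvalues with hlam
  set W : Matrix κ κ ℝ := ((Matrix.posSemidef_conjTranspose_mul_self A).1.eigenvectorUnitary : Matrix κ κ ℝ) with hW
  have hW2 : W * Wᵀ = 1 := by
    rw [← star_eq_transpose]
    exact (Matrix.posSemidef_conjTranspose_mul_self A).1.eigenvectorUnitary.2.2
  have hW1 : Wᵀ * W = 1 := by
    rw [← star_eq_transpose]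
    exact (Matrix.posSemidef_conjTranspose_mul_self A).1.eigenvectorUnitary.2.1
  have t1 : Matrix.trace (Qᵀ * A) = Matrix.trace (Wᵀ * (Qᵀ * A) * W) := by
    rw [← Matrix.trace_mul_cycle, mul_assoc, hW2, mul_one]
  have colunit : ∀ j, (fun i => W i j) ⬝ᵥ (fun i => W i j) = 1 := by
    intro j
    have := congrFun (congrFun hW1 j) j
    simp only [mul_apply, transpose_apply, one_apply_eq] at this
    simpa [dotProduct] using this
  have colA : ∀ j, (A *ᵥ fun i => W i j) ⬝ᵥ (A *ᵥ fun i => W i j) = lam j := by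
    intro j
    have h1 : (Wᵀ * (Aᵀ * A) * W) j j = lam j := by
      rw [spec_diag A]; simp; rfl
    rw [conj_diag_entry] at h1
    rw [← h1, dot_mulVec_eq]
  have t2 : Matrix.trace (Wᵀ * (Qᵀ * A) * W)
      = ∑ j, (Q *ᵥ fun i => W i j) ⬝ᵥ (A *ᵥ fun i => W i j) := by
    rw [Matrix.trace]
    refine Finset.sum_congr rfl fun j _ => ?_
    rw [Matrix.diag_apply, conj_diag_entry, ← mulVec_mulVec, dotProduct_mulVec, vecMul_transpose]
  rw [t1, t2, nucNorm_eq, Finset.mul_sum]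
  refine Finset.sum_le_sum fun j _ => ?_
  calc (Q *ᵥ fun i => W i j) ⬝ᵥ (A *ᵥ fun i => W i j)
      ≤ Real.sqrt ((Q *ᵥ fun i => W i j) ⬝ᵥ (Q *ᵥ fun i => W i j)) *
        Real.sqrt ((A *ᵥ fun i => W i j) ⬝ᵥ (A *ᵥ fun i => W i j)) := dot_le_sqrt _ _
    _ ≤ specNorm Q * Real.sqrt (lam j) := by
        rw [colA j]
        refine mul_le_mul_of_nonneg_right ?_ (Real.sqrt_nonneg _)
        have hb := dot_mulVec_self_le Q (fun i => W i j)
        rw [colunit j, mul_one] at hb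
        have := Real.sqrt_le_sqrt hb
        rwa [Real.sqrt_sq (specNorm_nonneg Q)] at this

end Spectral

section Attain

variable {ι κ : Type*} [Fintype ι] [Fintype κ] [DecidableEq κ]

lemma dot_diag_mulVec (d z : κ → ℝ) :
    z ⬝ᵥ (diagonal d *ᵥ z) = ∑ j, d j * z j ^ 2 := by
  simp only [dotProduct, mulVec_diagonal]
  exact Finset.sum_congr rfl fun j _ => by ring

lemma attain (A : Matrix ι κ ℝ) :
    ∃ Q : Matrix ι κ ℝ, specNorm Q ≤ 1 ∧ Matrix.trace (Qᵀ * A) = nucNorm A := by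
  classical
  set lam := (Matrix.posSemidef_conjTranspose_mul_self A).1.eigenvalues with hlam
  set W : Matrix κ κ ℝ :=
    ((Matrix.posSemidef_conjTranspose_mul_self A).1.eigenvectorUnitary : Matrix κ κ ℝ) with hW
  have hW2 : W * Wᵀ = 1 := by
    rw [← star_eq_transpose]
    exact (Matrix.posSemidef_conjTranspose_mul_self A).1.eigenvectorUnitary.2.2
  have hlam_nonneg : ∀ j, 0 ≤ lam j :=
    (Matrix.posSemidef_conjTranspose_mul_self A).eigenvalues_nonneg
  set f : κ → ℝ := fun j => if lam j = 0 then 0 else (Real.sqrt (lam j))⁻¹ with hf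
  refine ⟨A * W * diagonal f * Wᵀ, ?_, ?_⟩
  · -- specNorm bound
    refine specNorm_le_of_bound _ 1 zero_le_one fun x => ?_
    have hQx : (A * W * diagonal f * Wᵀ) *ᵥ x
        = A *ᵥ (W *ᵥ (diagonal f *ᵥ (Wᵀ *ᵥ x))) := by
      rw [← mulVec_mulVec, ← mulVec_mulVec, ← mulVec_mulVec]
    set y := Wᵀ *ᵥ x with hy
    set z := diagonal f *ᵥ y with hz
    have step1 : (A *ᵥ (W *ᵥ z)) ⬝ᵥ (A *ᵥ (W *ᵥ z))
        = (W *ᵥ z) ⬝ᵥ ((Aᵀ * A) *ᵥ (W *ᵥ z)) := dot_mulVec_eq A _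
    have step2 : (W *ᵥ z) ⬝ᵥ ((Aᵀ * A) *ᵥ (W *ᵥ z))
        = z ⬝ᵥ ((Wᵀ * (Aᵀ * A) * W) *ᵥ z) := by
      conv_rhs => rw [← mulVec_mulVec, ← mulVec_mulVec, dotProduct_mulVec, vecMul_transpose]
    have step3 : z ⬝ᵥ ((Wᵀ * (Aᵀ * A) * W) *ᵥ z) = ∑ j, lam j * z j ^ 2 := by
      rw [spec_diag A, ← hlam, dot_diag_mulVec]
    have hzj : ∀ j, z j = f j * y j := by
      intro j; rw [hz, mulVec_diagonal]
    have step4 : ∑ j, lam j * z j ^ 2 ≤ ∑ j, y j ^ 2 := by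
      refine Finset.sum_le_sum fun j _ => ?_
      rw [hzj j]
      by_cases h0 : lam j = 0
      · simp [hf, h0, sq_nonneg]
      · have hpos : 0 < lam j := lt_of_le_of_ne (hlam_nonneg j) (Ne.symm h0)
        have hsq : Real.sqrt (lam j) ^ 2 = lam j := Real.sq_sqrt (hlam_nonneg j)
        rw [hf]
        simp only [h0, if_false]
        rw [mul_pow, ← mul_assoc, inv_pow, hsq]
        rw [mul_inv_cancel₀ (ne_of_gt hpos), one_mul]
    have step5 : ∑ j, y j ^ 2 ≤ 1 ^ 2 * (x ⬝ᵥ x) := by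
      have : ∑ j, y j ^ 2 = y ⬝ᵥ y := by simp [dotProduct, pow_two]
      rw [this, hy, dot_mulVec_eq, transpose_transpose, hW2, one_mulVec, one_pow, one_mul]
    calc ((A * W * diagonal f * Wᵀ) *ᵥ x) ⬝ᵥ ((A * W * diagonal f * Wᵀ) *ᵥ x)
        = ∑ j, lam j * z j ^ 2 := by rw [hQx, step1, step2, step3]
      _ ≤ ∑ j, y j ^ 2 := step4
      _ ≤ 1 ^ 2 * (x ⬝ᵥ x) := step5
  · -- trace equality
    have hQT : (A * W * diagonal f * Wᵀ)ᵀ = W * (diagonal f * (Wᵀ * Aᵀ)) := by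
      simp [transpose_mul, diagonal_transpose, Matrix.mul_assoc]
    rw [hQT, Matrix.mul_assoc, Matrix.trace_mul_comm]
    have hassoc : diagonal f * (Wᵀ * Aᵀ) * A * W = diagonal f * (Wᵀ * (Aᵀ * A) * W) := by
      simp only [Matrix.mul_assoc]
    rw [hassoc, spec_diag A, ← hlam, diagonal_mul_diagonal, Matrix.trace_diagonal,
      nucNorm_eq, ← hlam]
    refine Finset.sum_congr rfl fun j _ => ?_
    by_cases h0 : lam j = 0
    · simp [hf, h0]
    · have hpos : 0 < lam j := lt_of_le_of_ne (hlam_nonneg j) (Ne.symm h0)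
      have hmul : Real.sqrt (lam j) * Real.sqrt (lam j) = lam j :=
        Real.mul_self_sqrt (hlam_nonneg j)
      rw [hf]
      simp only [h0, if_false]
      field_simp
      rw [Real.sq_sqrt (hlam_nonneg j)]

end Attain

section Blocks

lemma trace_block {N m n : ℕ} (Q D : Matrix (Fin N × Fin m) (Fin n) ℝ) :
    Matrix.trace (Qᵀ * D)
      = ∑ i : Fin N, Matrix.trace ((Matrix.of fun k j => Q (i, k) j)ᵀ * Matrix.of fun k j => D (i, k) j) := by
  simp only [Matrix.trace, Matrix.diag_apply, mul_apply, transpose_apply,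
    Fintype.sum_prod_type, Matrix.of_apply]
  rw [Finset.sum_comm]

lemma specNorm_block_le {N m n : ℕ} (M : Matrix (Fin N × Fin m) (Fin n) ℝ) (i : Fin N) :
    specNorm (Matrix.of fun k j => M (i, k) j) ≤ specNorm M := by
  refine specNorm_le_of_bound _ _ (specNorm_nonneg M) fun x => ?_
  refine le_trans ?_ (dot_mulVec_self_le M x)
  show ∑ k, ((Matrix.of fun k j => M (i, k) j) *ᵥ x) k * ((Matrix.of fun k j => M (i, k) j) *ᵥ x) k
      ≤ (M *ᵥ x) ⬝ᵥ (M *ᵥ x)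
  have : (M *ᵥ x) ⬝ᵥ (M *ᵥ x) = ∑ i' : Fin N, ∑ k, (M *ᵥ x) (i', k) * (M *ᵥ x) (i', k) := by
    simp only [dotProduct, Fintype.sum_prod_type]
  rw [this]
  have hterm : ∀ k, ((Matrix.of fun k j => M (i, k) j) *ᵥ x) k = (M *ᵥ x) (i, k) := fun k => rfl
  simp only [hterm]
  exact Finset.single_le_sum
    (f := fun i' => ∑ k, (M *ᵥ x) (i', k) * (M *ᵥ x) (i', k))
    (fun _ _ => Finset.sum_nonneg fun _ _ => mul_self_nonneg _) (Finset.mem_univ i)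

end Blocks

theorem stmt10' {N m n : ℕ} (hN : 0 < N)
    (g : Fin N → Matrix (Fin m) (Fin n) ℝ → Matrix (Fin m) (Fin n) ℝ)
    (L : ℝ) (hL : 0 < L)
    (hLip : ∀ i X Y, nucNorm (g i X - g i Y) ≤ L * specNorm (X - Y)) :
    ∀ U V : Fin N → Matrix (Fin m) (Fin n) ℝ,
      nucNorm (vstack (fun i => g i (U i)) - vstack (fun i => g i (V i)))
        ≤ (N : ℝ) * L * specNorm (vstack U - vstack V) := by
  intro U V
  have hsub : vstack (fun i => g i (U i)) - vstack (fun i => g i (V i))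
      = vstack (fun i => g i (U i) - g i (V i)) := by
    ext p j; simp [vstack]
  have hsubUV : vstack U - vstack V = vstack (fun i => U i - V i) := by
    ext p j; simp [vstack]
  rw [hsub]
  set D := vstack (fun i => g i (U i) - g i (V i)) with hD
  obtain ⟨Q, hQ, hQA⟩ := attain D
  have hblockD : ∀ i, (Matrix.of fun k j => D (i, k) j) = g i (U i) - g i (V i) := fun i => rfl
  have hblockUV : ∀ i, (Matrix.of fun k j => (vstack U - vstack V) (i, k) j) = U i - V i := by
    intro i; rw [hsubUV]; rfl
  have hspecUV : ∀ i, specNorm (U i - V i) ≤ specNorm (vstack U - vstack V) := by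
    intro i
    have := specNorm_block_le (vstack U - vstack V) i
    rwa [hblockUV i] at this
  calc nucNorm D = Matrix.trace (Qᵀ * D) := hQA.symm
    _ = ∑ i : Fin N, Matrix.trace ((Matrix.of fun k j => Q (i, k) j)ᵀ * Matrix.of fun k j => D (i, k) j) :=
        trace_block Q D
    _ ≤ ∑ i : Fin N, L * specNorm (vstack U - vstack V) := by
        refine Finset.sum_le_sum fun i _ => ?_
        calc Matrix.trace ((Matrix.of fun k j => Q (i, k) j)ᵀ * Matrix.of fun k j => D (i, k) j)
            ≤ specNorm (Matrix.of fun k j => Q (i, k) j) * nucNorm (Matrix.of fun k j => D (i, k) j) :=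
              holder _ _
          _ ≤ 1 * nucNorm (Matrix.of fun k j => D (i, k) j) := by
              refine mul_le_mul_of_nonneg_right ((specNorm_block_le Q i).trans hQ)
                (nucNorm_nonneg _)
          _ = nucNorm (g i (U i) - g i (V i)) := by rw [one_mul, hblockD i]
          _ ≤ L * specNorm (U i - V i) := hLip i _ _
          _ ≤ L * specNorm (vstack U - vstack V) :=
              mul_le_mul_of_nonneg_left (hspecUV i) hL.le
    _ = (N : ℝ) * L * specNorm (vstack U - vstack V) := by
        rw [Finset.sum_const, Finset.card_univ, Fintype.card_fin, nsmul_eq_mul, mul_assoc]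

theorem stmt10 {N m n : ℕ} (hN : 0 < N)
    (f : Fin N → Matrix (Fin m) (Fin n) ℝ → ℝ)
    (g : Fin N → Matrix (Fin m) (Fin n) ℝ → Matrix (Fin m) (Fin n) ℝ)
    (hdiff : ∀ i X V, HasDerivAt (fun t : ℝ => f i (X + t • V)) (tin (g i X) V) 0)
    (L : ℝ) (hL : 0 < L)
    (hLip : ∀ i X Y, nucNorm (g i X - g i Y) ≤ L * specNorm (X - Y)) :
    ∀ U V : Fin N → Matrix (Fin m) (Fin n) ℝ,
      nucNorm (vstack (fun i => g i (U i)) - vstack (fun i => g i (V i)))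
        ≤ (N : ℝ) * L * specNorm (vstack U - vstack V) := by
  exact stmt10' hN g L hL hLip
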